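/- Let G be a finite simple graph with independence number α ≥ 2, let C be a vertex cover of G, and set S = V(G)∖C with 1 ≤ |S| ≤ α − 1. Let H = G(C) be the C-suspension of G. Then α(H) = α(G) and P_H(x) = P_G(x) + x(1+x)^{|S|}; in particular P_H(−1) = P_G(−1). -/

import Mathlib

open scoped Classical

/-- A finset of vertices is independent: no two of its members are adjacent. -/
def IsIndepFinset {V : Type*} (G : SimpleGraph V) (s : Finset V) : Prop :=
  ∀ a ∈ s, ∀ b ∈ s, ¬ G.Adj a b

/-- The independence polynomial of `G`, evaluated at `x : ℤ`:
`P_G(x) = Σ_i g_i x^i` where `g_i` is the number of independent sets of size `i`. -/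
noncomputable def indepPolynomial {V : Type*} [Fintype V] (G : SimpleGraph V) (x : ℤ) : ℤ :=
  ∑ s ∈ Finset.univ.filter (fun s : Finset V => IsIndepFinset G s), x ^ s.card

/-- The independence number of `G`. -/
noncomputable def indepNumber {V : Type*} [Fintype V] (G : SimpleGraph V) : ℕ :=
  (Finset.univ.filter (fun s : Finset V => IsIndepFinset G s)).sup Finset.card

/-- The `C`-suspension of `G`: adjoin a new vertex (`none`) adjacent exactly to `C`. -/
def susp {V : Type*} (G : SimpleGraph V) (C : Set V) : SimpleGraph (Option V) where
  Adj a b :=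
    match a, b with
    | some a, some b => G.Adj a b
    | some a, none => a ∈ C
    | none, some b => b ∈ C
    | none, none => False
  symm := by
    constructor
    rintro (_ | a) (_ | b) h
    · exact h
    · exact h
    · exact h
    · exact h.symm
  loopless := by
    constructor
    rintro (_ | a) h
    · exact h
    · exact G.irrefl h

section Aux

variable {V : Type*} [Fintype V] [DecidableEq V] (G : SimpleGraph V) (C : Finset V)

lemma susp_adj_some_some {a b : V} :
    (susp G (↑C : Set V)).Adj (some a) (some b) ↔ G.Adj a b := Iff.rfl

lemma aux_indep_map (T : Finset V) :
    IsIndepFinset (susp G (↑C : Set V)) (T.map Function.Embedding.some) ↔ IsIndepFinset G T := by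
  constructor
  · intro h a ha b hb hab
    exact h (some a) (by simp [ha]) (some b) (by simp [hb]) hab
  · rintro h a ha b hb hab
    simp only [Finset.mem_map, Function.Embedding.some_apply] at ha hb
    obtain ⟨a', ha', rfl⟩ := ha
    obtain ⟨b', hb', rfl⟩ := hb
    exact h a' ha' b' hb' hab

lemma aux_indep_insert (hcover : ∀ a b, G.Adj a b → a ∈ C ∨ b ∈ C) (T : Finset V) :
    IsIndepFinset (susp G (↑C : Set V)) (insert none (T.map Function.Embedding.some)) ↔
      T ⊆ Cᶜ := by
  constructor
  · intro h a ha
    simp only [Finset.mem_compl]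
    intro haC
    exact h none (Finset.mem_insert_self _ _) (some a)
      (Finset.mem_insert_of_mem (by simp [ha])) haC
  · intro hT a ha b hb hab
    have hmem : ∀ c : V, some c ∈ insert none (T.map Function.Embedding.some) → c ∉ C := by
      intro c hc
      rcases Finset.mem_insert.1 hc with h | h
      · exact absurd h (by simp)
      · simp only [Finset.mem_map, Function.Embedding.some_apply] at h
        obtain ⟨c', hc', hcc⟩ := h
        cases hcc
        exact Finset.mem_compl.1 (hT hc')
    match a, b with
    | some a, some b =>
        rcases hcover a b hab with h | h
        · exact hmem a ha h
        · exact hmem b hb h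
    | some a, none => exact hmem a ha hab
    | none, some b => exact hmem b hb hab
    | none, none => exact hab

end Aux

theorem stmt13 {V : Type*} [Fintype V] [DecidableEq V] (G : SimpleGraph V)
    (C : Finset V) (hcover : ∀ a b, G.Adj a b → a ∈ C ∨ b ∈ C)
    (hα : 2 ≤ indepNumber G)
    (hS1 : 1 ≤ (Cᶜ : Finset V).card)
    (hS2 : (Cᶜ : Finset V).card ≤ indepNumber G - 1) :
    indepNumber (susp G (↑C : Set V)) = indepNumber G ∧
      (∀ x : ℤ, indepPolynomial (susp G (↑C : Set V)) x =
        indepPolynomial G x + x * (1 + x) ^ (Cᶜ : Finset V).card) ∧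
      indepPolynomial (susp G (↑C : Set V)) (-1) = indepPolynomial G (-1) := by
  set H := susp G (↑C : Set V) with hH
  -- independence number
  have hnum : indepNumber H = indepNumber G := by
    apply le_antisymm
    · apply Finset.sup_le
      intro s hs
      have hind : IsIndepFinset H s := (Finset.mem_filter.1 hs).2
      by_cases hn : none ∈ s
      · -- card s ≤ 1 + |Cᶜ| ≤ α
        have hsub : s.eraseNone ⊆ Cᶜ := by
          intro a ha
          rw [Finset.mem_compl]
          intro haC
          exact hind none hn (some a) (Finset.mem_eraseNone.1 ha) haC
        have hcard : s.card ≤ s.eraseNone.card + 1 := by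
          have : s ⊆ insert none (s.eraseNone.map Function.Embedding.some) := by
            intro a ha
            match a with
            | none => exact Finset.mem_insert_self _ _
            | some a =>
                exact Finset.mem_insert_of_mem (by simp [Finset.mem_eraseNone, ha])
          calc s.card ≤ (insert none (s.eraseNone.map Function.Embedding.some)).card :=
                Finset.card_le_card this
            _ ≤ (s.eraseNone.map Function.Embedding.some).card + 1 := Finset.card_insert_le _ _
            _ = s.eraseNone.card + 1 := by rw [Finset.card_map]
        have := Finset.card_le_card hsub
        omega
      · -- s comes from an independent set of G
        have hs' : s = s.eraseNone.map Function.Embedding.some := by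
          rw [Finset.map_some_eraseNone, Finset.erase_eq_self.2 hn]
        have : IsIndepFinset G s.eraseNone := by
          rw [← aux_indep_map G C, ← hs']; exact hind
        have hc : s.card = s.eraseNone.card := by
          conv_lhs => rw [hs', Finset.card_map]
        exact hc.le.trans (Finset.le_sup (Finset.mem_filter.2 ⟨Finset.mem_univ _, this⟩))
    · apply Finset.sup_le
      intro T hT
      have hind : IsIndepFinset G T := (Finset.mem_filter.1 hT).2
      have : IsIndepFinset H (T.map Function.Embedding.some) := (aux_indep_map G C T).2 hind
      calc T.card = (T.map Function.Embedding.some).card := (Finset.card_map _).symm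
        _ ≤ indepNumber H := Finset.le_sup (Finset.mem_filter.2 ⟨Finset.mem_univ _, this⟩)
  have hpoly : ∀ x : ℤ, indepPolynomial H x =
      indepPolynomial G x + x * (1 + x) ^ (Cᶜ : Finset V).card := by
    intro x
    rw [indepPolynomial, ← Finset.sum_filter_add_sum_filter_not
      (Finset.univ.filter fun s => IsIndepFinset H s) (fun s => none ∈ s)]
    have h1 : ∑ s ∈ (Finset.univ.filter fun s => IsIndepFinset H s).filter (fun s => none ∉ s),
        x ^ s.card = indepPolynomial G x := by
      rw [indepPolynomial]
      refine Finset.sum_nbij' (fun s => s.eraseNone) (fun T => T.map Function.Embedding.some)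
        ?_ ?_ ?_ ?_ ?_
      · intro s hs
        simp only [Finset.mem_filter, Finset.mem_univ, true_and] at hs ⊢
        have hs' : s = s.eraseNone.map Function.Embedding.some := by
          rw [Finset.map_some_eraseNone, Finset.erase_eq_self.2 hs.2]
        rw [← aux_indep_map G C, ← hs']; exact hs.1
      · intro T hT
        simp only [Finset.mem_filter, Finset.mem_univ, true_and] at hT ⊢
        exact ⟨(aux_indep_map G C T).2 hT, by simp⟩
      · intro s hs
        simp only [Finset.mem_filter] at hs
        show s.eraseNone.map Function.Embedding.some = s
        rw [Finset.map_some_eraseNone, Finset.erase_eq_self.2 hs.2]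
      · intro T hT
        exact Finset.eraseNone_map_some T
      · intro s hs
        simp only [Finset.mem_filter] at hs
        show x ^ s.card = x ^ s.eraseNone.card
        congr 1
        conv_lhs => rw [show s = s.eraseNone.map Function.Embedding.some from
          by rw [Finset.map_some_eraseNone, Finset.erase_eq_self.2 hs.2], Finset.card_map]
    have h2 : ∑ s ∈ (Finset.univ.filter fun s => IsIndepFinset H s).filter (fun s => none ∈ s),
        x ^ s.card = x * (1 + x) ^ (Cᶜ : Finset V).card := by
      have hsum : ∑ s ∈ (Finset.univ.filter fun s => IsIndepFinset H s).filter (fun s => none ∈ s),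
          x ^ s.card = ∑ T ∈ (Cᶜ : Finset V).powerset, x ^ (T.card + 1) := by
        refine Finset.sum_nbij' (fun s => s.eraseNone)
          (fun T => insert none (T.map Function.Embedding.some)) ?_ ?_ ?_ ?_ ?_
        · intro s hs
          simp only [Finset.mem_filter, Finset.mem_univ, true_and] at hs
          rw [Finset.mem_powerset]
          intro a ha
          rw [Finset.mem_compl]
          intro haC
          exact hs.1 none hs.2 (some a) (Finset.mem_eraseNone.1 ha) haC
        · intro T hT
          simp only [Finset.mem_filter, Finset.mem_univ, true_and]
          rw [Finset.mem_powerset] at hT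
          exact ⟨(aux_indep_insert G C hcover T).2 hT, Finset.mem_insert_self _ _⟩
        · intro s hs
          simp only [Finset.mem_filter] at hs
          show insert none (s.eraseNone.map Function.Embedding.some) = s
          rw [Finset.map_some_eraseNone, Finset.insert_erase hs.2]
        · intro T hT
          rw [Finset.mem_powerset] at hT
          ext a
          simp [Finset.mem_eraseNone]
        · intro s hs
          simp only [Finset.mem_filter] at hs
          have : s.card = (s.erase none).card + 1 := by
            rw [Finset.card_erase_of_mem hs.2]
            have : 1 ≤ s.card := Finset.card_pos.2 ⟨none, hs.2⟩
            omega
          rw [this, ← Finset.map_some_eraseNone, Finset.card_map]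
      rw [hsum]
      have hpow : ∑ T ∈ (Cᶜ : Finset V).powerset, x ^ T.card = (1 + x) ^ (Cᶜ : Finset V).card := by
        have := Finset.prod_add (fun _ : V => x) (fun _ : V => (1 : ℤ)) (Cᶜ : Finset V)
        simp only [Finset.prod_const, one_pow, mul_one] at this
        rw [add_comm (1 : ℤ) x]
        exact this.symm
      calc ∑ T ∈ (Cᶜ : Finset V).powerset, x ^ (T.card + 1)
          = ∑ T ∈ (Cᶜ : Finset V).powerset, x * x ^ T.card := by
            refine Finset.sum_congr rfl fun T _ => ?_; ring
        _ = x * (1 + x) ^ (Cᶜ : Finset V).card := by rw [← Finset.mul_sum, hpow]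
    rw [h1, h2, add_comm]
  refine ⟨hnum, hpoly, ?_⟩
  rw [hpoly (-1)]
  have : (1 + (-1 : ℤ)) = 0 := by ring
  rw [this, zero_pow (by omega), mul_zero, add_zero]
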